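/- arXiv:1707.00567 — 2 statements merged into one kernel-verified Lean document; each statement's English description precedes it below -/
import Mathlib

section
/- Let n_s, n_b, n be real numbers with 1 < n_s ≤ n ≤ n_b, and set α = 1/(n − 1). Then for all real numbers f and y: α·f² + 2·α·f·y + (1 + α)·y² ≥ (1/(n_b − 1))·(1 − 1/√(n_s))·(f² + y²). -/
/-- Coercivity estimate for the coefficient `α = 1/(n-1)` when `1 < n_s ≤ n ≤ n_b`. -/
theorem coercivity_alpha (ns nb n : ℝ) (hns : 1 < ns) (hsn : ns ≤ n) (hnb : n ≤ nb)
    (α : ℝ) (hα : α = 1 / (n - 1)) (f y : ℝ) :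
    α * f ^ 2 + 2 * α * f * y + (1 + α) * y ^ 2
      ≥ (1 / (nb - 1)) * (1 - 1 / Real.sqrt ns) * (f ^ 2 + y ^ 2) := by
  set s := Real.sqrt ns with hsdef
  have hs2 : s ^ 2 = ns := Real.sq_sqrt (by linarith)
  have hs1 : 1 < s := by nlinarith [Real.sqrt_nonneg ns]
  have hn1 : (0:ℝ) < n - 1 := by linarith
  have hnb1 : (0:ℝ) < nb - 1 := by linarith
  have hspos : (0:ℝ) < s := by linarith
  have hαpos : 0 < α := by rw [hα]; positivity
  have hαn : α * (n - 1) = 1 := by rw [hα]; field_simp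
  set c := (1 / (nb - 1)) * (1 - 1 / s) with hc
  have hαnb : 1 / (nb - 1) ≤ α := by
    rw [hα]; exact one_div_le_one_div_of_le hn1 (by linarith)
  have h1s : 1 / s < 1 := by
    rw [div_lt_one hspos]; exact hs1
  have hA : α * (1 - 1 / s) - c ≥ 0 := by
    rw [hc]
    have := mul_le_mul_of_nonneg_right hαnb (by linarith : (0:ℝ) ≤ 1 - 1 / s)
    linarith
  have hB : (1 + α * (1 - s)) - c ≥ 0 := by
    rw [hc]
    rw [ge_iff_le, sub_nonneg, div_mul_eq_mul_div, div_le_iff₀ hnb1]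
    have h1 : 1 - 1 / s = (s - 1) / s := by field_simp
    have hαs : α * (s - 1) ≤ 1 / (s + 1) := by
      rw [hα, div_mul_eq_mul_div, div_le_div_iff₀ hn1 (by linarith)]
      nlinarith
    have hcb : (s - 1) / s ≤ (nb - 1) / (s * (s + 1)) := by
      rw [div_le_div_iff₀ hspos (by positivity)]
      nlinarith
    calc 1 * (1 - 1 / s) = (s - 1) / s := by rw [one_mul, h1]
      _ ≤ (nb - 1) / (s * (s + 1)) := hcb
      _ ≤ (1 + α * (1 - s)) * (nb - 1) := by
          rw [div_le_iff₀ (by positivity)]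
          have : 1 + α * (1 - s) ≥ s / (s + 1) := by
            have : α * (s - 1) ≤ 1 / (s + 1) := hαs
            have h2 : s / (s + 1) = 1 - 1 / (s + 1) := by field_simp; ring
            linarith
          have hge : (1 + α * (1 - s)) * (nb - 1) * (s * (s + 1)) ≥
              (s / (s + 1)) * (nb - 1) * (s * (s + 1)) := by
            apply mul_le_mul_of_nonneg_right (mul_le_mul_of_nonneg_right this (by linarith))
              (by positivity)
          have heq : (s / (s + 1)) * (nb - 1) * (s * (s + 1)) = s^2 * (nb - 1) := by
            field_simp
          nlinarith
  have hkey : α * f ^ 2 + 2 * α * f * y + (1 + α) * y ^ 2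
      = α * (1 - 1 / s) * f ^ 2 + (1 + α * (1 - s)) * y ^ 2 + (α / s) * (f + s * y) ^ 2 := by
    field_simp
    ring
  have h3 : (α / s) * (f + s * y) ^ 2 ≥ 0 := by positivity
  have := mul_nonneg hA (sq_nonneg f)
  have := mul_nonneg hB (sq_nonneg y)
  rw [hkey]
  nlinarith
end

section
/- Let (Ω, μ) be a measure space and let n : Ω → ℝ be a measurable function with 1 < n_s ≤ n(x) ≤ n_b for μ-almost every x, where n_s, n_b are real constants. Set α(x) = 1/(n(x) − 1). Then for all real-valued functions f, y ∈ L²(μ): ∫ α·f² dμ + 2·∫ α·f·y dμ + ∫ (1 + α)·y² dμ ≥ (1/(n_b − 1))·(1 − √(1/n_s))·(‖f‖²_{L²} + ‖y‖²_{L²}). -/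
open MeasureTheory

lemma key_pointwise (a s B f y : ℝ) (hs : 1 < s) (ha0 : 0 < a) (hB : 0 < B)
    (ha1 : 1/B ≤ a) (ha2 : a ≤ 1/(s^2-1)) (hBs : s^2 - 1 ≤ B) :
    (1/B)*(1-1/s)*(f^2+y^2) ≤ a*f^2 + 2*(a*f*y) + (1+a)*y^2 := by
  have hs0 : (0:ℝ) < s := by linarith
  have hs1 : (0:ℝ) < s^2 - 1 := by nlinarith
  set c : ℝ := (1/B)*(1-1/s) with hc
  have hc0 : 0 ≤ c := by
    apply mul_nonneg (by positivity)
    have : 1/s ≤ 1 := by rw [div_le_one hs0]; linarith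
    linarith
  have h1s : (0:ℝ) ≤ 1 - 1/s := by
    have : 1/s ≤ 1 := by rw [div_le_one hs0]; linarith
    linarith
  have h1 : c ≤ a*(1-1/s) := mul_le_mul_of_nonneg_right ha1 h1s
  have ha2' : a * (s^2-1) ≤ 1 := by
    rw [← le_div_iff₀ hs1]; exact ha2
  have h2 : c ≤ 1 - a*(s-1) := by
    have h3 : a*(s-1) ≤ 1/(s+1) := by
      rw [le_div_iff₀ (by linarith : (0:ℝ) < s+1)]
      nlinarith
    have h4 : c ≤ (1/(s^2-1))*(1-1/s) := by
      apply mul_le_mul_of_nonneg_right _ h1s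
      exact one_div_le_one_div_of_le hs1 hBs
    have h5 : (1/(s^2-1))*(1-1/s) ≤ 1 - 1/(s+1) := by
      have e : (1/(s^2-1))*(1-1/s) = 1/(s*(s+1)) := by
        field_simp
        ring
      have e2 : 1 - 1/(s+1) = s/(s+1) := by
        field_simp
        ring
      rw [e, e2, div_le_div_iff₀ (by positivity) (by positivity)]
      nlinarith
    linarith
  have hid : a*f^2 + 2*(a*f*y) + (1+a)*y^2
      = a*(1-1/s)*f^2 + (1-a*(s-1))*y^2 + (a*s)*(f/s+y)^2 := by
    field_simp
    ring
  rw [hid]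
  have hf2 : c*f^2 ≤ a*(1-1/s)*f^2 := mul_le_mul_of_nonneg_right h1 (sq_nonneg f)
  have hy2 : c*y^2 ≤ (1-a*(s-1))*y^2 := mul_le_mul_of_nonneg_right h2 (sq_nonneg y)
  have hpos : 0 ≤ (a*s)*(f/s+y)^2 := mul_nonneg (by positivity) (sq_nonneg _)
  nlinarith

lemma toReal_eLpNorm_two_sq {Ω : Type*} [MeasurableSpace Ω] {μ : Measure Ω}
    {f : Ω → ℝ} (hf : MemLp f 2 μ) :
    (eLpNorm f 2 μ).toReal ^ 2 = ∫ x, f x ^ 2 ∂μ := by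
  have h1 : ((eLpNorm f 2 μ).toReal)^2 = ‖hf.toLp f‖^2 := by rw [Lp.norm_toLp]
  rw [h1, ← real_inner_self_eq_norm_sq, L2.inner_def]
  refine integral_congr_ae ?_
  filter_upwards [hf.coeFn_toLp] with x hx
  simp [hx, real_inner_self_eq_norm_sq, Real.norm_eq_abs, sq_abs, sq]

/-- Coercivity estimate in `L²(μ)` for the coefficient `α(x) = 1/(n(x)-1)` when
`1 < n_s ≤ n(x) ≤ n_b` almost everywhere. -/
theorem coercivity_alpha_L2 {Ω : Type*} [MeasurableSpace Ω] (μ : Measure Ω)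
    (n : Ω → ℝ) (hn : Measurable n) (ns nb : ℝ) (hns : 1 < ns)
    (hbound : ∀ᵐ x ∂μ, ns ≤ n x ∧ n x ≤ nb)
    (α : Ω → ℝ) (hα : ∀ x, α x = 1 / (n x - 1))
    (f y : Ω → ℝ) (hf : MemLp f 2 μ) (hy : MemLp y 2 μ) :
    (∫ x, α x * f x ^ 2 ∂μ) + 2 * (∫ x, α x * f x * y x ∂μ)
        + (∫ x, (1 + α x) * y x ^ 2 ∂μ)
      ≥ (1 / (nb - 1)) * (1 - Real.sqrt (1 / ns)) *
          ((eLpNorm f 2 μ).toReal ^ 2 + (eLpNorm y 2 μ).toReal ^ 2) := by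
  by_cases hμ : μ = 0
  · subst hμ
    simp
  · have hne : (MeasureTheory.ae μ).NeBot := ae_neBot.2 hμ
    obtain ⟨x0, hx01, hx02⟩ := hbound.exists
    have hnb : 1 < nb := lt_of_lt_of_le hns (hx01.trans hx02)
    set s := Real.sqrt ns with hsdef
    have hs2 : s^2 = ns := Real.sq_sqrt (by linarith)
    have hs1 : 1 < s := by nlinarith [Real.sqrt_nonneg ns]
    have hsqrt : Real.sqrt (1/ns) = 1/s := by
      rw [one_div, Real.sqrt_inv, one_div]
    -- a.e. bounds on α
    have hab : ∀ᵐ x ∂μ, 1/(nb-1) ≤ α x ∧ α x ≤ 1/(ns-1) ∧ 0 < α x := by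
      filter_upwards [hbound] with x hx
      obtain ⟨h1, h2⟩ := hx
      have hd : 0 < n x - 1 := by linarith
      rw [hα x]
      refine ⟨one_div_le_one_div_of_le hd (by linarith),
        one_div_le_one_div_of_le (by linarith) (by linarith),
        one_div_pos.2 hd⟩
    have hαm : AEStronglyMeasurable α μ := by
      have hmeas : Measurable α := by
        have : α = fun x => 1 / (n x - 1) := funext hα
        rw [this]
        exact measurable_const.div (hn.sub measurable_const)
      exact hmeas.aestronglyMeasurable
    have hf2 := hf.integrable_sq
    have hy2 := hy.integrable_sq
    have hfy : Integrable (fun x => f x * y x) μ := by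
      refine Integrable.mono' ((hf2.add hy2).div_const 2) (hf.1.mul hy.1) ?_
      refine Filter.Eventually.of_forall fun x => ?_
      rw [Real.norm_eq_abs, abs_mul]
      simp only [Pi.add_apply]
      nlinarith [sq_nonneg (|f x| - |y x|), abs_nonneg (f x), abs_nonneg (y x),
        sq_abs (f x), sq_abs (y x)]
    have hbd : ∀ᵐ x ∂μ, ‖α x‖ ≤ 1/(ns-1) := by
      filter_upwards [hab] with x hx
      rw [Real.norm_eq_abs, abs_of_pos hx.2.2]
      exact hx.2.1
    have I1 : Integrable (fun x => α x * f x ^ 2) μ := hf2.bdd_mul hαm hbd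
    have I2 : Integrable (fun x => α x * f x * y x) μ := by
      have : Integrable (fun x => α x * (f x * y x)) μ := hfy.bdd_mul hαm hbd
      simpa [mul_assoc] using this
    have I3 : Integrable (fun x => (1 + α x) * y x ^ 2) μ := by
      refine hy2.bdd_mul (c := 1 + 1/(ns-1)) (aestronglyMeasurable_const.add hαm) ?_
      filter_upwards [hab] with x hx
      rw [Real.norm_eq_abs, abs_of_pos (by linarith [hx.2.2] : (0:ℝ) < 1 + α x)]
      linarith [hx.2.1]
    -- pointwise inequality
    have hpt : ∀ᵐ x ∂μ, (1/(nb-1))*(1-1/s)*(f x ^ 2 + y x ^ 2)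
        ≤ α x * f x ^ 2 + 2*(α x * f x * y x) + (1 + α x) * y x ^ 2 := by
      filter_upwards [hab] with x hx
      exact key_pointwise (α x) s (nb-1) (f x) (y x) hs1 hx.2.2 (by linarith)
        hx.1 (by rw [hs2]; exact hx.2.1) (by rw [hs2]; linarith)
    rw [ge_iff_le, toReal_eLpNorm_two_sq hf, toReal_eLpNorm_two_sq hy, hsqrt]
    have hR : (1/(nb-1)) * (1 - 1/s) * ((∫ x, f x ^ 2 ∂μ) + ∫ x, y x ^ 2 ∂μ)
        = ∫ x, (1/(nb-1))*(1-1/s)*(f x ^ 2 + y x ^ 2) ∂μ := by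
      rw [integral_const_mul, integral_add hf2 hy2]
    have hL : ∫ x, (α x * f x ^ 2 + 2*(α x * f x * y x) + (1 + α x) * y x ^ 2) ∂μ
        = (∫ x, α x * f x ^ 2 ∂μ) + 2 * (∫ x, α x * f x * y x ∂μ)
          + (∫ x, (1 + α x) * y x ^ 2 ∂μ) := by
      have I12 : Integrable (fun x => α x * f x ^ 2 + 2*(α x * f x * y x)) μ :=
        I1.add (I2.const_mul 2)
      rw [integral_add I12 I3, integral_add I1 (I2.const_mul 2), integral_const_mul]
    rw [hR, ← hL]
    exact integral_mono_ae ((hf2.add hy2).const_mul _)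
      ((I1.add (I2.const_mul 2)).add I3) hpt
end
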